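/- Let K ≥ 2 and define d_k = (1/4)·(k/K) for 2 ≤ k ≤ K and d₁ = 0, and for each i ∈ {1,...,K} define gaps Δ_k^i = d_i + d_k for k ≠ i and Δ_i^i = d_i (with the convention appropriate for i ≥ 2), and H(i) = ∑_{k≠i} (Δ_k^i)^{-2}. Then for every i with 2 ≤ i ≤ K, d_i² · H(i) ≤ 2i. -/

import Mathlib

open Finset in
lemma sum_shift_inv_sq_le (x : ℝ) (hx : 0 ≤ x) :
    ∀ b : ℕ, 1 ≤ b → ∑ k ∈ Icc 2 b, ((x + (k:ℝ))^2)⁻¹ ≤ (x+1)⁻¹ - (x+(b:ℝ))⁻¹ := by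
  intro b hb
  induction b with
  | zero => omega
  | succ n ih =>
    rcases Nat.lt_or_ge n 1 with h | hn
    · have hn0 : n = 0 := by omega
      subst hn0
      norm_num
    · have hsum := ih hn
      rw [Finset.sum_Icc_succ_top (by omega : 2 ≤ n+1)]
      have hn1 : (1:ℝ) ≤ (n:ℝ) := by exact_mod_cast hn
      have h1 : (0:ℝ) < x + n := by linarith
      have h2 : (0:ℝ) < x + n + 1 := by linarith
      have key : ((x + ((n+1:ℕ):ℝ))^2)⁻¹ ≤ (x+(n:ℝ))⁻¹ - (x+((n+1:ℕ):ℝ))⁻¹ := by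
        push_cast
        have heq : (x+(n:ℝ))⁻¹ - (x+(n:ℝ)+1)⁻¹ = ((x+n)*(x+n+1))⁻¹ := by
          field_simp; ring
        rw [show x + ((n:ℝ)+1) = x + n + 1 by ring, heq]
        apply inv_anti₀ (by positivity)
        nlinarith
      push_cast at key hsum ⊢
      linarith

open Finset in
/-- In the flipped-Bernoulli construction with gaps `d_k = k/(4K)` for `2 ≤ k ≤ K`, `d₁ = 0`,
`Δ_k^i = d_i + d_k` for `k ≠ i`, and `H(i) = ∑_{k ≠ i} (Δ_k^i)⁻²`, one has
`d_i² H(i) ≤ 2 i` for every `2 ≤ i ≤ K`. -/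
theorem gapsq_mul_complexity_le (K : ℕ) (hK : 2 ≤ K) (d H : ℕ → ℝ)
    (hd : ∀ k, d k = if k = 1 then 0 else (1/4) * ((k : ℝ)/(K : ℝ)))
    (hH : ∀ i ∈ Icc 1 K, H i = ∑ k ∈ (Icc 1 K).erase i, ((d i + d k)^2)⁻¹) :
    ∀ i ∈ Icc 2 K, (d i)^2 * H i ≤ 2 * i := by
  intro i hi
  rw [mem_Icc] at hi
  obtain ⟨hi2, hiK⟩ := hi
  have hKpos : (0:ℝ) < K := by exact_mod_cast Nat.lt_of_lt_of_le (by norm_num) hK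
  have hipos : (0:ℝ) < i := by exact_mod_cast Nat.lt_of_lt_of_le (by norm_num) hi2
  have hdi : d i = (i:ℝ)/(4*K) := by
    rw [hd, if_neg (by omega)]; ring
  have hdipos : 0 < d i := by rw [hdi]; positivity
  rw [hH i (by simp [mem_Icc]; omega)]
  have h1mem : (1:ℕ) ∈ (Icc 1 K).erase i := by
    simp [mem_erase, mem_Icc]; omega
  rw [← Finset.sum_erase_add _ _ h1mem]
  have herase : ((Icc 1 K).erase i).erase 1 = (Icc 2 K).erase i := by
    rw [Finset.erase_right_comm, Finset.Icc_erase_left, ← Finset.Icc_add_one_left_eq_Ioc]; rfl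
  rw [herase]
  have hd1 : d 1 = 0 := by simp [hd]
  have hterm1 : d i ^ 2 * ((d i + d 1)^2)⁻¹ = 1 := by
    rw [hd1, add_zero, mul_inv_cancel₀ (by positivity)]
  have hstep1 : ∑ k ∈ (Icc 2 K).erase i, ((d i + d k)^2)⁻¹
      ≤ ∑ k ∈ Icc 2 K, ((d i + d k)^2)⁻¹ := by
    apply Finset.sum_le_sum_of_subset_of_nonneg (Finset.erase_subset _ _)
    intro k _ _
    positivity
  have hcong : ∑ k ∈ Icc 2 K, ((d i + d k)^2)⁻¹
      = (4*(K:ℝ))^2 * ∑ k ∈ Icc 2 K, (((i:ℝ) + (k:ℝ))^2)⁻¹ := by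
    rw [Finset.mul_sum]
    apply Finset.sum_congr rfl
    intro k hk
    rw [mem_Icc] at hk
    have hdk : d k = (k:ℝ)/(4*K) := by rw [hd, if_neg (by omega)]; ring
    have hkpos : (0:ℝ) < k := by exact_mod_cast Nat.lt_of_lt_of_le (by norm_num) hk.1
    rw [hdi, hdk]
    rw [← add_div]
    rw [div_pow, inv_div]
    field_simp
  have hsum := sum_shift_inv_sq_le (i:ℝ) (le_of_lt hipos) K (by omega)
  have hKi : (0:ℝ) < (i:ℝ) + K := by positivity
  have hsum' : ∑ k ∈ Icc 2 K, (((i:ℝ) + (k:ℝ))^2)⁻¹ ≤ ((i:ℝ)+1)⁻¹ := by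
    have : (0:ℝ) < ((i:ℝ)+(K:ℝ))⁻¹ := by positivity
    linarith
  have hmain : d i ^ 2 * ∑ k ∈ (Icc 2 K).erase i, ((d i + d k)^2)⁻¹ ≤ (i:ℝ) := by
    calc d i ^ 2 * ∑ k ∈ (Icc 2 K).erase i, ((d i + d k)^2)⁻¹
        ≤ d i ^ 2 * ((4*(K:ℝ))^2 * ∑ k ∈ Icc 2 K, (((i:ℝ) + (k:ℝ))^2)⁻¹) := by
          rw [← hcong]
          exact mul_le_mul_of_nonneg_left hstep1 (by positivity)
      _ = (i:ℝ)^2 * ∑ k ∈ Icc 2 K, (((i:ℝ) + (k:ℝ))^2)⁻¹ := by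
          rw [hdi]; field_simp
      _ ≤ (i:ℝ)^2 * ((i:ℝ)+1)⁻¹ := by
          exact mul_le_mul_of_nonneg_left hsum' (by positivity)
      _ ≤ ((i:ℝ)*((i:ℝ)+1)) * ((i:ℝ)+1)⁻¹ := by
          apply mul_le_mul_of_nonneg_right (by nlinarith) (by positivity)
      _ = (i:ℝ) := by field_simp
  have hi1 : (1:ℝ) ≤ (i:ℝ) := by exact_mod_cast (show 1 ≤ i by omega)
  calc d i ^ 2 * (∑ k ∈ (Icc 2 K).erase i, ((d i + d k)^2)⁻¹ + ((d i + d 1)^2)⁻¹)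
      = d i ^ 2 * ∑ k ∈ (Icc 2 K).erase i, ((d i + d k)^2)⁻¹ + d i ^2 * ((d i + d 1)^2)⁻¹ := by ring
    _ ≤ (i:ℝ) + 1 := by rw [hterm1]; linarith
    _ ≤ 2 * i := by linarith
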